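/- Let T be a Toeplitz operator on ℓ²(ℕ, ℂ) (S₀* T S₀ = T) with symbol coefficients φ_k (k ∈ ℤ), and let C be a conjugation on ℓ²(ℕ, ℂ) with canonical factorization C = U ∘ J; set f_n := U e_n = C e_n for n ∈ ℕ. Then T is C-symmetric (C T* C = T) if and only if ⟨T f_n, f_m⟩ = φ_{n−m} for all m, n ∈ ℕ; that is, the matrix of T with respect to the orthonormal basis {f_n} equals the transpose of the Toeplitz matrix of T with respect to the standard basis {e_n}. -/

import Mathlib

noncomputable section
open scoped ComplexConjugate
open ContinuousLinearMap

/-- A conjugation on a complex Hilbert space: an antilinear, involutive, isometric map. -/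
def IsConjugation {E : Type*} [NormedAddCommGroup E] [InnerProductSpace ℂ E] (C : E → E) : Prop :=
  (∀ (a : ℂ) (f g : E), C (a • f + g) = conj a • C f + C g) ∧
  (∀ f, C (C f) = f) ∧
  (∀ f, ‖C f‖ = ‖f‖)

/-- The inner product in the paper's convention: linear in the first argument and
conjugate-linear in the second (Mathlib's `inner` with the arguments swapped). -/
def ip {E : Type*} [NormedAddCommGroup E] [InnerProductSpace ℂ E] (x y : E) : ℂ :=
  inner ℂ y x

/-- `ℓ²(ℕ, ℂ)`, identified with the Hardy space `H²(𝔻)` via Taylor coefficients. -/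
abbrev Ell2 : Type := lp (fun _ : ℕ => ℂ) 2

/-- The standard orthonormal basis of `ℓ²(ℕ, ℂ)`. -/
def e (n : ℕ) : Ell2 := lp.single 2 n 1

section ConjAux

variable {E : Type*} [NormedAddCommGroup E] [InnerProductSpace ℂ E]

theorem IsConjugation.add {C : E → E} (hC : IsConjugation C) (x y : E) :
    C (x + y) = C x + C y := by
  simpa using hC.1 1 x y

theorem IsConjugation.zero {C : E → E} (hC : IsConjugation C) : C 0 = 0 := by
  have h := hC.add 0 0
  rw [add_zero] at h
  exact left_eq_add.mp h

theorem IsConjugation.smul {C : E → E} (hC : IsConjugation C) (a : ℂ) (x : E) :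
    C (a • x) = conj a • C x := by
  have := hC.1 a x 0
  simpa [hC.zero] using this

theorem IsConjugation.norm_map {C : E → E} (hC : IsConjugation C) (x : E) : ‖C x‖ = ‖x‖ :=
  hC.2.2 x

theorem IsConjugation.re_inner {C : E → E} (hC : IsConjugation C) (x y : E) :
    (inner ℂ (C x) (C y) : ℂ).re = (inner ℂ x y : ℂ).re := by
  have h1 := norm_add_sq (𝕜 := ℂ) (C x) (C y)
  have h2 := norm_add_sq (𝕜 := ℂ) x y
  rw [← hC.add x y, hC.norm_map (x + y), hC.norm_map x, hC.norm_map y] at h1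
  have := h1.symm.trans h2
  simp only [RCLike.re_to_complex] at this ⊢
  linarith

theorem IsConjugation.inner_map {C : E → E} (hC : IsConjugation C) (x y : E) :
    (inner ℂ (C x) (C y) : ℂ) = (inner ℂ y x : ℂ) := by
  have him := hC.re_inner x (Complex.I • y)
  rw [hC.smul Complex.I y] at him
  rw [inner_smul_right, inner_smul_right] at him
  simp only [Complex.conj_I, Complex.mul_re, Complex.neg_re, Complex.I_re, Complex.neg_im,
    Complex.I_im] at him
  have hre := hC.re_inner x y
  have hconj : (inner ℂ y x : ℂ) = conj (inner ℂ x y : ℂ) := (inner_conj_symm y x).symm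
  apply Complex.ext
  · rw [hconj, Complex.conj_re]; exact hre
  · rw [hconj, Complex.conj_im]; linarith [him]

theorem IsConjugation.sub {C : E → E} (hC : IsConjugation C) (x y : E) :
    C (x - y) = C x - C y := by
  have h := hC.add (x - y) y
  rw [sub_add_cancel] at h
  rw [eq_comm, sub_eq_iff_eq_add, ← h]

theorem IsConjugation.isometry {C : E → E} (hC : IsConjugation C) : Isometry C := by
  refine Isometry.of_dist_eq fun x y => ?_
  rw [dist_eq_norm, dist_eq_norm, ← hC.sub x y, hC.norm_map]

end ConjAux

theorem inner_e_apply (m : ℕ) (v : Ell2) : (inner ℂ (e m) v : ℂ) = v m := by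
  rw [e, lp.inner_single_left]
  simp [RCLike.inner_apply]

theorem eq_zero_of_inner_e (v : Ell2) (h : ∀ m, (inner ℂ (e m) v : ℂ) = 0) : v = 0 := by
  apply lp.ext
  funext m
  have := h m
  rw [inner_e_apply] at this
  simpa using this

theorem dense_span_e : Dense ((Submodule.span ℂ (Set.range e) : Submodule ℂ Ell2) : Set Ell2) := by
  have htop : (Submodule.span ℂ (Set.range e)).topologicalClosure = ⊤ := by
    rw [Submodule.topologicalClosure_eq_top_iff]
    rw [Submodule.eq_bot_iff]
    intro v hv
    refine eq_zero_of_inner_e v fun m => ?_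
    exact hv (e m) (Submodule.subset_span ⟨m, rfl⟩)
  rw [dense_iff_closure_eq, ← Submodule.topologicalClosure_coe, htop, Submodule.top_coe]

/-- Let `T` be a Toeplitz operator on `ℓ²(ℕ, ℂ)` with symbol coefficients
`φ_k` (`φ_{m−n} = ⟨T e_n, e_m⟩`), and let `C` be a conjugation with canonical factorization
`C = U ∘ J`; set `f_n := U e_n = C e_n`.  Then `T` is `C`-symmetric (`C T* C = T`) if and only
if `⟨T f_n, f_m⟩ = φ_{n−m}` for all `m, n ∈ ℕ`, i.e. the matrix of `T` with respect to `{f_n}`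
is the transpose of its Toeplitz matrix with respect to `{e_n}`. -/
theorem c_symmetric_iff_matrix_transpose
    (S₀ T : Ell2 →L[ℂ] Ell2) (hS₀ : ∀ n, S₀ (e n) = e (n + 1))
    (hT : (adjoint S₀).comp (T.comp S₀) = T)
    (φ : ℤ → ℂ) (hφ : ∀ m n : ℕ, φ ((m : ℤ) - (n : ℤ)) = ip (T (e n)) (e m))
    (C : Ell2 → Ell2) (hC : IsConjugation C)
    (J : Ell2 → Ell2) (hJ : IsConjugation J) (hJe : ∀ n, J (e n) = e n)
    (U : Ell2 ≃ₗᵢ[ℂ] Ell2) (hU : ∀ x, C x = U (J x))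
    (f : ℕ → Ell2) (hf : ∀ n, f n = U (e n)) :
    (∀ x, C (adjoint T (C x)) = T x) ↔
      ∀ m n : ℕ, ip (T (f n)) (f m) = φ ((n : ℤ) - (m : ℤ)) := by
  have hfC : ∀ k, C (e k) = f k := fun k => by rw [hU, hJe, hf]
  constructor
  · intro hsym m n
    have hTC : T (C (e n)) = C (adjoint T (e n)) := by
      have := hsym (C (e n))
      rw [hC.2.1] at this
      exact this.symm
    calc ip (T (f n)) (f m) = (inner ℂ (C (e m)) (T (C (e n))) : ℂ) := by
          rw [ip, hfC n, hfC m]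
        _ = (inner ℂ (C (e m)) (C (adjoint T (e n))) : ℂ) := by rw [hTC]
        _ = (inner ℂ (adjoint T (e n)) (e m) : ℂ) := hC.inner_map _ _
        _ = (inner ℂ (e n) (T (e m)) : ℂ) := adjoint_inner_left T (e m) (e n)
        _ = ip (T (e m)) (e n) := rfl
        _ = φ ((n : ℤ) - (m : ℤ)) := (hφ n m).symm
  · intro hmat x
    -- first prove it on the basis vectors
    have hbase : ∀ n, C (adjoint T (C (e n))) = T (e n) := by
      intro n
      have hco : ∀ m, (inner ℂ (e m) (C (adjoint T (C (e n))) - T (e n)) : ℂ) = 0 := by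
        intro m
        rw [inner_sub_right]
        have h1 : (inner ℂ (e m) (C (adjoint T (C (e n)))) : ℂ) = φ ((m : ℤ) - (n : ℤ)) := by
          calc (inner ℂ (e m) (C (adjoint T (C (e n)))) : ℂ)
              = (inner ℂ (C (C (e m))) (C (adjoint T (C (e n)))) : ℂ) := by rw [hC.2.1]
            _ = (inner ℂ (adjoint T (C (e n))) (C (e m)) : ℂ) := hC.inner_map _ _
            _ = (inner ℂ (C (e n)) (T (C (e m))) : ℂ) := adjoint_inner_left T (C (e m)) (C (e n))
            _ = ip (T (f m)) (f n) := by rw [ip, hfC n, hfC m]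
            _ = φ ((m : ℤ) - (n : ℤ)) := hmat n m
        have h2 : (inner ℂ (e m) (T (e n)) : ℂ) = φ ((m : ℤ) - (n : ℤ)) := (hφ m n).symm
        rw [h1, h2, sub_self]
      have := eq_zero_of_inner_e _ hco
      exact sub_eq_zero.mp this
    -- the set where the identity holds is a closed set containing the span of the basis
    have hcont : Continuous fun x : Ell2 => C (adjoint T (C x)) :=
      hC.isometry.continuous.comp ((adjoint T).continuous.comp hC.isometry.continuous)
    have hcl : IsClosed {x : Ell2 | C (adjoint T (C x)) = T x} :=
      isClosed_eq hcont T.continuous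
    have hspan : ((Submodule.span ℂ (Set.range e) : Submodule ℂ Ell2) : Set Ell2) ⊆
        {x : Ell2 | C (adjoint T (C x)) = T x} := by
      intro x hx
      induction hx using Submodule.span_induction with
      | mem x hx =>
        obtain ⟨n, rfl⟩ := hx
        exact hbase n
      | zero => simp [hC.zero]
      | add x y _ _ hx hy =>
        simp only [Set.mem_setOf_eq] at hx hy ⊢
        rw [hC.add, map_add, hC.add, hx, hy, map_add]
      | smul a x _ hx =>
        simp only [Set.mem_setOf_eq] at hx ⊢
        rw [hC.smul, map_smul, hC.smul, map_smul, ← hx, Complex.conj_conj]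
    have hxmem : x ∈ closure ((Submodule.span ℂ (Set.range e) : Submodule ℂ Ell2) : Set Ell2) :=
      dense_span_e x
    exact closure_minimal hspan hcl hxmem
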